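/- For s ≥ 3, the group G_s = ⟨a, b, t | t⁻¹at = b, t⁻¹bt = W(b,a)·b·W(a,b)⁻¹⟩ with W(x,y) = xy⁴xy⁵x⋯xy^{4+s}x contains a subgroup that is locally free and not free. -/

import Mathlib

/-- The word `W(x,y) = x y⁴ x y⁵ x ⋯ x y^(4+s) x`. -/
def W {G : Type*} [Group G] (s : ℕ) (x y : G) : G :=
  x * (((List.range (s + 1)).map fun i => y ^ (4 + i) * x).prod)

/-- Generators: `0 = a`, `1 = b`, `2 = t`.  Relations of
`⟨a, b, t | t⁻¹at = b, t⁻¹bt = W(b,a)·b·W(a,b)⁻¹⟩`. -/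
def gsrels (s : ℕ) : Set (FreeGroup (Fin 3)) :=
  {(FreeGroup.of 2)⁻¹ * FreeGroup.of 0 * FreeGroup.of 2 * (FreeGroup.of 1)⁻¹,
   (FreeGroup.of 2)⁻¹ * FreeGroup.of 1 * FreeGroup.of 2 *
     (W s (FreeGroup.of 1) (FreeGroup.of 0) * FreeGroup.of 1 *
       (W s (FreeGroup.of 0) (FreeGroup.of 1))⁻¹)⁻¹}


namespace Pf

open FreeGroup List

abbrev F : Type := FreeGroup (Fin 2)

def ga : F := FreeGroup.of 0
def gb : F := FreeGroup.of 1

abbrev Ltr := (Fin 2) × Bool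

/-- no cancellation between adjacent letters -/
def NC (p q : Ltr) : Prop := p.1 = q.1 → p.2 = q.2

instance (p q : Ltr) : Decidable (NC p q) := by
  unfold NC; infer_instance

lemma chain_reduce : ∀ {l : List Ltr}, l.Chain' NC → FreeGroup.reduce l = l := by
  intro l
  induction l with
  | nil => intro _; rfl
  | cons x xs ih =>
    intro h
    have hxs : xs.Chain' NC := h.tail
    rw [FreeGroup.reduce.cons, ih hxs]
    cases xs with
    | nil => rfl
    | cons y ys =>
      have hnc : NC x y := List.isChain_cons_cons.mp h |>.1
      simp only []
      rw [if_neg]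
      rintro ⟨h1, h2⟩
      have := hnc h1
      rw [this] at h2
      exact Bool.not_ne_self _ h2.symm

lemma reduce_chain : ∀ {l : List Ltr}, FreeGroup.reduce l = l → l.Chain' NC := by
  intro l
  induction l with
  | nil => intro _; exact List.isChain_nil
  | cons x xs ih =>
    intro h
    rw [FreeGroup.reduce.cons] at h
    rcases hxs : FreeGroup.reduce xs with _ | ⟨y, ys⟩
    · rw [hxs] at h
      simp only [] at h
      have : xs = [] := by
        injection h with _ h2
        exact h2.symm
      subst this; exact List.isChain_singleton x
    · rw [hxs] at h
      simp only [] at h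
      by_cases hc : x.1 = y.1 ∧ x.2 = !y.2
      · rw [if_pos hc] at h
        exfalso
        have := congrArg List.length h
        have h2 := FreeGroup.Red.length_le (FreeGroup.reduce.red (L := xs))
        rw [hxs] at h2
        simp at this h2
        omega
      · rw [if_neg hc] at h
        have hxs' : xs = y :: ys := by
          injection h with _ h2
          exact h2.symm
        have : FreeGroup.reduce xs = xs := by rw [hxs, hxs']
        have hch := ih this
        rw [hxs'] at hch ⊢
        refine List.isChain_cons_cons.mpr ⟨?_, hch⟩
        intro h1
        by_contra h2
        exact hc ⟨h1, by cases x.2 <;> cases y.2 <;> simp_all⟩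

lemma chain_invRev {l : List Ltr} (h : l.Chain' NC) : (FreeGroup.invRev l).Chain' NC :=
  reduce_chain (by rw [FreeGroup.reduce_invRev, chain_reduce h])

lemma chain_of_pos {l : List Ltr} (h : ∀ p ∈ l, p.2 = true) : l.Chain' NC := by
  induction l with
  | nil => exact List.isChain_nil
  | cons x xs ih =>
    cases xs with
    | nil => exact List.isChain_singleton x
    | cons y ys =>
      refine List.isChain_cons_cons.mpr ⟨?_, ih (fun p hp => h p (List.mem_cons_of_mem _ hp))⟩
      intro _
      rw [h x (by simp), h y (by simp)]

lemma invRev_append (l₁ l₂ : List Ltr) :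
    FreeGroup.invRev (l₁ ++ l₂) = FreeGroup.invRev l₂ ++ FreeGroup.invRev l₁ := by
  simp [FreeGroup.invRev]

lemma mk_flatten : ∀ (Ls : List (List Ltr)),
    FreeGroup.mk Ls.flatten = (Ls.map FreeGroup.mk).prod := by
  intro Ls
  induction Ls with
  | nil => rfl
  | cons l ls ih => simp [List.flatten_cons, ← FreeGroup.mul_mk, ih]

lemma mk_replicate (x : Fin 2) (n : ℕ) :
    FreeGroup.mk (List.replicate n (x, true)) = FreeGroup.of x ^ n := by
  induction n with
  | zero => rfl
  | succ n ih => rw [List.replicate_succ, ← List.singleton_append, ← FreeGroup.mul_mk, pow_succ']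
                 rw [ih]; rfl

/-- The word of `W s (of y) (of x)`. -/
def ww (s : ℕ) (y x : Fin 2) : List Ltr :=
  (y, true) :: ((List.range (s + 1)).map fun i =>
    List.replicate (4 + i) (x, true) ++ [(y, true)]).flatten

lemma ww_pos (s : ℕ) (y x : Fin 2) : ∀ p ∈ ww s y x, p.2 = true := by
  intro p hp
  simp only [ww, List.mem_cons, List.mem_flatten, List.mem_map] at hp
  rcases hp with rfl | ⟨l, ⟨i, _, rfl⟩, hpl⟩
  · rfl
  · rcases List.mem_append.mp hpl with h | h
    · exact (List.eq_of_mem_replicate h) ▸ rfl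
    · simp at h; rw [h]

lemma chain_ww (s : ℕ) (y x : Fin 2) : (ww s y x).Chain' NC :=
  chain_of_pos (ww_pos s y x)

lemma mk_ww (s : ℕ) (y x : Fin 2) :
    FreeGroup.mk (ww s y x) = W s (FreeGroup.of y) (FreeGroup.of x) := by
  rw [W, ww, ← List.singleton_append, ← FreeGroup.mul_mk, mk_flatten]
  congr 1
  rw [List.map_map]
  refine congrArg List.prod (List.map_congr_left ?_)
  intro i _
  simp only [Function.comp_apply, ← FreeGroup.mul_mk, mk_replicate]
  rfl

end Pf

namespace Pf

open FreeGroup List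

-- letters
def lA : Ltr := ((0 : Fin 2), true)
def lA' : Ltr := ((0 : Fin 2), false)
def lB : Ltr := ((1 : Fin 2), true)
def lB' : Ltr := ((1 : Fin 2), false)

lemma chain_toWord (v : F) : v.toWord.Chain' NC :=
  reduce_chain (FreeGroup.reduce_toWord v)

lemma toWord_mul_of_chain {l : List Ltr} {v : F} (h : (l ++ v.toWord).Chain' NC) :
    (FreeGroup.mk l * v).toWord = l ++ v.toWord := by
  conv_lhs => rw [← FreeGroup.mk_toWord (x := v)]
  rw [FreeGroup.mul_mk, FreeGroup.toWord_mk, chain_reduce h]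

lemma chain_append' {l m : List Ltr} (hl : l.Chain' NC) (hm : m.Chain' NC)
    (hj : ∀ x ∈ l.getLast?, ∀ y ∈ m.head?, NC x y) : (l ++ m).Chain' NC :=
  List.isChain_append.mpr ⟨hl, hm, hj⟩

lemma chain_left {l m : List Ltr} (h : (l ++ m).Chain' NC) : l.Chain' NC :=
  (List.isChain_append.mp h).1

lemma mk_neg (x : Fin 2) : FreeGroup.mk [(x, false)] = (FreeGroup.of x)⁻¹ := by
  have : FreeGroup.invRev [(x, true)] = [(x, false)] := by simp [FreeGroup.invRev]
  rw [← this, ← FreeGroup.inv_mk]; rfl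

-- blocks
def blk (x y : Fin 2) (i : ℕ) : List Ltr := List.replicate (4 + i) (x, true) ++ [(y, true)]

def tlw (s : ℕ) (x y : Fin 2) : List Ltr := ((List.range s).map (blk x y ∘ Nat.succ)).flatten

lemma ww_blk (s : ℕ) (y x : Fin 2) :
    ww s y x = (y, true) :: ((List.range (s+1)).map (blk x y)).flatten := rfl

lemma ww_eq (s : ℕ) (y x : Fin 2) :
    ww s y x = [(y, true)] ++ (blk x y 0 ++ tlw s x y) := by
  rw [ww_blk, tlw, List.range_succ_eq_map, List.map_cons, List.map_map, List.flatten_cons]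
  rfl

lemma ww_last (s : ℕ) (y x : Fin 2) :
    ∃ u, ww s y x = u ++ [(y, true)] := by
  refine ⟨(y, true) :: ((List.range s).map (blk x y)).flatten ++ List.replicate (4 + s) (x, true), ?_⟩
  rw [ww_blk, List.range_succ, List.map_append, List.flatten_append]
  simp [blk]

def pw (s : ℕ) : List Ltr := ww s 1 0
def qw (s : ℕ) : List Ltr := ww s 0 1
def cw (s : ℕ) : List Ltr := pw s ++ [lB] ++ FreeGroup.invRev (qw s)

def gc (s : ℕ) : F := FreeGroup.mk (cw s)

lemma gc_eq (s : ℕ) : gc s = W s gb ga * gb * (W s ga gb)⁻¹ := by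
  rw [gc, cw, ← FreeGroup.mul_mk, ← FreeGroup.mul_mk, ← FreeGroup.inv_mk]
  rw [pw, qw, mk_ww, mk_ww]
  rfl

lemma chain_cw (s : ℕ) : (cw s).Chain' NC := by
  rw [cw]
  refine chain_append' (chain_append' (chain_of_pos (ww_pos s 1 0)) ?_ ?_)
      (chain_invRev (chain_of_pos (ww_pos s 0 1))) ?_
  · exact List.isChain_singleton _
  · intro x hx y hy
    simp at hy
    subst hy
    have : x.2 = true := ww_pos s 1 0 x (List.mem_of_mem_getLast? hx)
    intro _; rw [this]; rfl
  · intro x hx y hy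
    have hx' : x = lB := by
      rw [List.getLast?_concat] at hx; exact (Option.some_inj.mp hx).symm
    obtain ⟨u, hu⟩ := ww_last s 0 1
    rw [qw, hu, invRev_append] at hy
    have : FreeGroup.invRev [((0:Fin 2), true)] = [lA'] := by simp [FreeGroup.invRev]; rfl
    rw [this] at hy
    simp at hy
    subst hx' hy
    intro h; exact absurd h (by decide)

def midw (s : ℕ) : List Ltr :=
  ([lB] ++ tlw s 0 1) ++ [lB] ++ FreeGroup.invRev ([lA] ++ tlw s 1 0)

lemma cw_decomp (s : ℕ) :
    cw s = [lB, lA, lA, lA, lA] ++ midw s ++ [lB', lB', lB', lB', lA'] := by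
  rw [cw, pw, qw, ww_eq, ww_eq, midw]
  rw [show blk 0 1 0 = [lA, lA, lA, lA, lB] from rfl,
      show blk 1 0 0 = [lB, lB, lB, lB, lA] from rfl]
  rw [show ([((0:Fin 2), true)] ++ ([lB, lB, lB, lB, lA] ++ tlw s 1 0) : List Ltr)
        = [lA, lB, lB, lB, lB] ++ ([lA] ++ tlw s 1 0) by simp [lA]]
  rw [invRev_append]
  rw [show FreeGroup.invRev [lA, lB, lB, lB, lB] = [lB', lB', lB', lB', lA'] by
    simp [FreeGroup.invRev, lA, lB, lA', lB']]
  simp [lA, lB, lA', lB', List.append_assoc]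

end Pf

namespace Pf

open FreeGroup List

def InC (g : F) : Prop := ∃ l, g.toWord = lB :: lA :: lA :: lA :: l
def InC' (g : F) : Prop := ∃ l, g.toWord = lA :: lB :: lB :: lB :: l
def InB (g : F) : Prop := (∃ l, g.toWord = lB :: l) ∧ ¬ InC g
def InB' (g : F) : Prop := (∃ l, g.toWord = lB' :: l) ∨ (∃ l, g.toWord = lA :: lA :: l)

lemma gb_mk : gb = FreeGroup.mk [lB] := rfl
lemma gbinv_mk : gb⁻¹ = FreeGroup.mk [lB'] := by
  rw [gb_mk, FreeGroup.inv_mk]; rfl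
lemma ga_mk : ga = FreeGroup.mk [lA] := rfl

lemma chain_cons_extract {v : F} {x : Ltr} {l : List Ltr} (hv : v.toWord = x :: l) :
    l.Chain' NC := by
  have := chain_toWord v
  rw [hv] at this
  exact this.tail

/-- generic: prepend an explicit word with no junction cancellation -/
lemma toWord_prepend {l : List Ltr} {v : F} (hl : l.Chain' NC)
    (hj : ∀ x ∈ l.getLast?, ∀ y ∈ v.toWord.head?, NC x y) :
    (FreeGroup.mk l * v).toWord = l ++ v.toWord :=
  toWord_mul_of_chain (chain_append' hl (chain_toWord v) hj)

-- 1
lemma mulB_B {v : F} (h : InB v) : InB (gb * v) := by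
  obtain ⟨⟨l, hv⟩, -⟩ := h
  have hw : (gb * v).toWord = [lB] ++ v.toWord := by
    refine toWord_prepend (List.isChain_singleton _) ?_
    intro x hx y hy
    simp at hx; subst hx
    rw [hv] at hy; simp at hy; subst hy
    decide
  rw [hv] at hw
  constructor
  · exact ⟨_, hw⟩
  · rintro ⟨l', hl'⟩
    rw [hw] at hl'
    simp [lA, lB] at hl'
-- 2
lemma mulB_C {v : F} (h : InC v) : InB (gb * v) := by
  obtain ⟨l, hv⟩ := h
  have hw : (gb * v).toWord = [lB] ++ v.toWord := by
    refine toWord_prepend (List.isChain_singleton _) ?_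
    intro x hx y hy
    simp at hx; subst hx
    rw [hv] at hy; simp at hy; subst hy
    decide
  rw [hv] at hw
  constructor
  · exact ⟨_, hw⟩
  · rintro ⟨l', hl'⟩
    rw [hw] at hl'
    simp [lA, lB] at hl'
-- 3
lemma mulB_C' {v : F} (h : InC' v) : InB (gb * v) := by
  obtain ⟨l, hv⟩ := h
  have hw : (gb * v).toWord = [lB] ++ v.toWord := by
    refine toWord_prepend (List.isChain_singleton _) ?_
    intro x hx y hy
    simp at hx; subst hx
    rw [hv] at hy; simp at hy; subst hy
    decide
  rw [hv] at hw
  constructor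
  · exact ⟨_, hw⟩
  · rintro ⟨l', hl'⟩
    rw [hw] at hl'
    simp [lA, lB] at hl'
-- 4
lemma mulB'_B' {v : F} (h : InB' v) : InB' (gb⁻¹ * v) := by
  have key : ∀ y ∈ v.toWord.head?, NC lB' y → InB' (gb⁻¹ * v) := by
    intro y hy hnc
    have hw : (gb⁻¹ * v).toWord = [lB'] ++ v.toWord := by
      rw [gbinv_mk]
      refine toWord_prepend (List.isChain_singleton _) ?_
      intro x hx y' hy'
      simp at hx; subst hx
      rw [hy'] at hy  -- align
      simp at hy; subst hy; exact hnc
    exact Or.inl ⟨_, by rw [hw]; rfl⟩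
  rcases h with ⟨l, hv⟩ | ⟨l, hv⟩
  · exact key lB' (by rw [hv]; rfl) (by decide)
  · exact key lA (by rw [hv]; rfl) (by decide)
-- 5
lemma mulB'_C {v : F} (h : InC v) : InB' (gb⁻¹ * v) := by
  obtain ⟨l, hv⟩ := h
  have hv' : v = gb * FreeGroup.mk (lA :: lA :: lA :: l) := by
    rw [gb_mk, FreeGroup.mul_mk, show ([lB] ++ lA :: lA :: lA :: l) = lB :: lA :: lA :: lA :: l from rfl,
      ← hv, FreeGroup.mk_toWord]
  have : gb⁻¹ * v = FreeGroup.mk (lA :: lA :: lA :: l) := by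
    rw [hv']; group
  refine Or.inr ⟨lA :: l, ?_⟩
  rw [this, FreeGroup.toWord_mk, chain_reduce (chain_cons_extract hv)]
-- 6
lemma mulB'_C' {v : F} (h : InC' v) : InB' (gb⁻¹ * v) := by
  obtain ⟨l, hv⟩ := h
  have hw : (gb⁻¹ * v).toWord = [lB'] ++ v.toWord := by
    rw [gbinv_mk]
    refine toWord_prepend (List.isChain_singleton _) ?_
    intro x hx y hy
    simp at hx; subst hx
    rw [hv] at hy; simp at hy; subst hy
    decide
  exact Or.inl ⟨_, by rw [hw]; rfl⟩

end Pf

namespace Pf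

open FreeGroup List

def big1 (s : ℕ) : List Ltr := [lB, lA, lA, lA, lA] ++ midw s ++ [lB', lB', lB', lB']
def icw (s : ℕ) : List Ltr := FreeGroup.invRev (cw s)
def ib1 (s : ℕ) : List Ltr :=
  [lA, lB, lB, lB, lB] ++ FreeGroup.invRev (midw s) ++ [lA', lA', lA', lA']
def ib2 (s : ℕ) : List Ltr :=
  [lA, lB, lB, lB, lB] ++ FreeGroup.invRev (midw s) ++ [lA', lA', lA']
def ib3 (s : ℕ) : List Ltr :=
  [lA, lB, lB, lB, lB] ++ FreeGroup.invRev (midw s) ++ [lA', lA']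

lemma cw_eq_big1 (s : ℕ) : cw s = big1 s ++ [lA'] := by
  rw [cw_decomp, big1]; simp [List.append_assoc]

lemma icw_decomp (s : ℕ) :
    icw s = [lA, lB, lB, lB, lB] ++ FreeGroup.invRev (midw s) ++ [lA', lA', lA', lA', lB'] := by
  rw [icw, cw_decomp, invRev_append, invRev_append]
  rw [show FreeGroup.invRev [lB', lB', lB', lB', lA'] = [lA, lB, lB, lB, lB] by
        simp [FreeGroup.invRev, lA, lB, lA', lB'],
      show FreeGroup.invRev [lB, lA, lA, lA, lA] = [lA', lA', lA', lA', lB'] by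
        simp [FreeGroup.invRev, lA, lB, lA', lB']]
  simp [List.append_assoc]

lemma icw_eq1 (s : ℕ) : icw s = ib1 s ++ [lB'] := by
  rw [icw_decomp, ib1]; simp [List.append_assoc]
lemma ib1_eq (s : ℕ) : ib1 s = ib2 s ++ [lA'] := by
  rw [ib1, ib2]; simp [List.append_assoc]
lemma ib2_eq (s : ℕ) : ib2 s = ib3 s ++ [lA'] := by
  rw [ib2, ib3]; simp [List.append_assoc]

lemma chain_big1 (s : ℕ) : (big1 s).Chain' NC :=
  chain_left (l := big1 s) (m := [lA']) (by rw [← cw_eq_big1]; exact chain_cw s)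
lemma chain_icw (s : ℕ) : (icw s).Chain' NC := chain_invRev (chain_cw s)
lemma chain_ib1 (s : ℕ) : (ib1 s).Chain' NC :=
  chain_left (l := ib1 s) (m := [lB']) (by rw [← icw_eq1]; exact chain_icw s)
lemma chain_ib2 (s : ℕ) : (ib2 s).Chain' NC :=
  chain_left (l := ib2 s) (m := [lA']) (by rw [← ib1_eq]; exact chain_ib1 s)
lemma chain_ib3 (s : ℕ) : (ib3 s).Chain' NC :=
  chain_left (l := ib3 s) (m := [lA']) (by rw [← ib2_eq]; exact chain_ib2 s)

lemma last_cw (s : ℕ) : (cw s).getLast? = some lA' := by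
  rw [cw_eq_big1]; exact List.getLast?_concat
lemma last_icw (s : ℕ) : (icw s).getLast? = some lB' := by
  rw [icw_eq1]; exact List.getLast?_concat
lemma last_big1 (s : ℕ) : (big1 s).getLast? = some lB' := by
  rw [show big1 s = ([lB, lA, lA, lA, lA] ++ midw s ++ [lB', lB', lB']) ++ [lB'] by
      rw [big1]; simp [List.append_assoc]]
  exact List.getLast?_concat
lemma last_ib1 (s : ℕ) : (ib1 s).getLast? = some lA' := by
  rw [ib1_eq]; exact List.getLast?_concat
lemma last_ib2 (s : ℕ) : (ib2 s).getLast? = some lA' := by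
  rw [ib2_eq]; exact List.getLast?_concat
lemma last_ib3 (s : ℕ) : (ib3 s).getLast? = some lA' := by
  rw [show ib3 s = ([lA, lB, lB, lB, lB] ++ FreeGroup.invRev (midw s) ++ [lA']) ++ [lA'] by
      rw [ib3]; simp [List.append_assoc]]
  exact List.getLast?_concat

-- element identities
lemma gc_mk (s : ℕ) : gc s = FreeGroup.mk (cw s) := rfl
lemma gci_mk (s : ℕ) : (gc s)⁻¹ = FreeGroup.mk (icw s) := by
  rw [gc_mk, FreeGroup.inv_mk]; rfl
lemma mk_lA' : FreeGroup.mk [lA'] = ga⁻¹ := mk_neg 0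
lemma mk_lB' : FreeGroup.mk [lB'] = gb⁻¹ := mk_neg 1

lemma gc_ga (s : ℕ) : gc s * ga = FreeGroup.mk (big1 s) := by
  rw [gc_mk, cw_eq_big1, ← FreeGroup.mul_mk, mk_lA', mul_assoc, inv_mul_cancel, mul_one]
lemma gci_gb (s : ℕ) : (gc s)⁻¹ * gb = FreeGroup.mk (ib1 s) := by
  rw [gci_mk, icw_eq1, ← FreeGroup.mul_mk, mk_lB', mul_assoc, inv_mul_cancel, mul_one]
lemma gci_gba (s : ℕ) : (gc s)⁻¹ * gb * ga = FreeGroup.mk (ib2 s) := by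
  rw [gci_gb, ib1_eq, ← FreeGroup.mul_mk, mk_lA', mul_assoc, inv_mul_cancel, mul_one]
lemma gci_gbaa (s : ℕ) : (gc s)⁻¹ * gb * ga * ga = FreeGroup.mk (ib3 s) := by
  rw [gci_gba, ib2_eq, ← FreeGroup.mul_mk, mk_lA', mul_assoc, inv_mul_cancel, mul_one]

lemma toWord_concat {l m : List Ltr} (hl : l.Chain' NC) (hm : m.Chain' NC)
    (hj : ∀ x ∈ l.getLast?, ∀ y ∈ m.head?, NC x y) :
    (FreeGroup.mk l * FreeGroup.mk m).toWord = l ++ m := by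
  rw [FreeGroup.mul_mk, FreeGroup.toWord_mk, chain_reduce (chain_append' hl hm hj)]

lemma split_head {v : F} {x : Ltr} {l : List Ltr} (hv : v.toWord = x :: l) :
    v = FreeGroup.mk [x] * FreeGroup.mk l := by
  rw [FreeGroup.mul_mk, show ([x] ++ l) = x :: l from rfl, ← hv, FreeGroup.mk_toWord]

lemma nc_lA' {y : Ltr} (h : y ≠ lA) : NC lA' y := by
  intro h1
  rcases y with ⟨y1, y2⟩
  cases y2
  · rfl
  · exfalso; apply h
    have : y1 = 0 := h1.symm
    rw [lA, this]

lemma nc_lB' {y : Ltr} (h : y ≠ lB) : NC lB' y := by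
  intro h1
  rcases y with ⟨y1, y2⟩
  cases y2
  · rfl
  · exfalso; apply h
    have : y1 = 1 := h1.symm
    rw [lB, this]

-- 7, 8 : multiplication by c with head lB target
lemma mulC_headB {s : ℕ} {v : F} (hv : v.toWord.head? = some lB) : InC (gc s * v) := by
  have hw : (gc s * v).toWord = cw s ++ v.toWord := by
    rw [gc_mk]
    refine toWord_prepend (chain_cw s) ?_
    intro x hx y hy
    rw [last_cw s] at hx
    simp at hx; subst hx
    rw [hv] at hy; simp at hy; subst hy
    decide
  exact ⟨lA :: (midw s ++ [lB', lB', lB', lB', lA'] ++ v.toWord), by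
    rw [hw, cw_decomp]; simp [List.append_assoc]⟩

lemma mulC_C {s : ℕ} {v : F} (h : InC v) : InC (gc s * v) := by
  obtain ⟨l, hv⟩ := h; exact mulC_headB (by rw [hv]; rfl)

lemma mulC_B {s : ℕ} {v : F} (h : InB v) : InC (gc s * v) := by
  obtain ⟨⟨l, hv⟩, -⟩ := h; exact mulC_headB (by rw [hv]; rfl)

-- 9
lemma mulC_B' {s : ℕ} {v : F} (h : InB' v) : InC (gc s * v) := by
  rcases h with ⟨l, hv⟩ | ⟨l, hv⟩
  · -- head lB' : no cancellation
    have hw : (gc s * v).toWord = cw s ++ v.toWord := by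
      rw [gc_mk]
      refine toWord_prepend (chain_cw s) ?_
      intro x hx y hy
      rw [last_cw s] at hx
      simp at hx; subst hx
      rw [hv] at hy; simp at hy; subst hy
      decide
    exact ⟨lA :: (midw s ++ [lB', lB', lB', lB', lA'] ++ v.toWord), by
      rw [hw, cw_decomp]; simp [List.append_assoc]⟩
  · -- v = a * (a :: l)
    have hsplit : v = ga * FreeGroup.mk (lA :: l) := by
      rw [ga_mk]; exact split_head hv
    have hmul : gc s * v = FreeGroup.mk (big1 s) * FreeGroup.mk (lA :: l) := by
      rw [hsplit, ← mul_assoc, gc_ga]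
    have hw : (gc s * v).toWord = big1 s ++ (lA :: l) := by
      rw [hmul]
      refine toWord_concat (chain_big1 s) (chain_cons_extract hv) ?_
      intro x hx y hy
      rw [last_big1 s] at hx
      simp at hx; subst hx
      simp at hy; subst hy
      decide
    exact ⟨lA :: (midw s ++ [lB', lB', lB', lB'] ++ (lA :: l)), by
      rw [hw, big1]; simp [List.append_assoc]⟩

-- 10, 11
lemma mulC'_noCancel {s : ℕ} {v : F} {y : Ltr} (hy : v.toWord.head? = some y)
    (hnc : NC lB' y) : InC' ((gc s)⁻¹ * v) := by
  have hw : ((gc s)⁻¹ * v).toWord = icw s ++ v.toWord := by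
    rw [gci_mk]
    refine toWord_prepend (chain_icw s) ?_
    intro x hx y' hy'
    rw [last_icw s] at hx
    simp at hx; subst hx
    rw [hy'] at hy; simp at hy; subst hy
    exact hnc
  exact ⟨lB :: (FreeGroup.invRev (midw s) ++ [lA', lA', lA', lA', lB'] ++ v.toWord), by
    rw [hw, icw_decomp]; simp [List.append_assoc]⟩

lemma mulC'_C' {s : ℕ} {v : F} (h : InC' v) : InC' ((gc s)⁻¹ * v) := by
  obtain ⟨l, hv⟩ := h
  exact mulC'_noCancel (by rw [hv]; rfl) (by decide)

lemma mulC'_B' {s : ℕ} {v : F} (h : InB' v) : InC' ((gc s)⁻¹ * v) := by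
  rcases h with ⟨l, hv⟩ | ⟨l, hv⟩
  · exact mulC'_noCancel (by rw [hv]; rfl) (by decide)
  · exact mulC'_noCancel (by rw [hv]; rfl) (by decide)

-- 12
lemma mulC'_B {s : ℕ} {v : F} (h : InB v) : InC' ((gc s)⁻¹ * v) := by
  obtain ⟨⟨l, hv⟩, hnc⟩ := h
  have hsplit : v = gb * FreeGroup.mk l := by rw [gb_mk]; exact split_head hv
  have hmul1 : (gc s)⁻¹ * v = FreeGroup.mk (ib1 s) * FreeGroup.mk l := by
    rw [hsplit, ← mul_assoc, gci_gb]
  have hchl : l.Chain' NC := chain_cons_extract hv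
  -- helper to conclude from an explicit word
  have conclude : ∀ (bg : List Ltr) (m : List Ltr), ((gc s)⁻¹ * v) = FreeGroup.mk bg * FreeGroup.mk m →
      bg.Chain' NC → m.Chain' NC → bg.getLast? = some lA' →
      (∀ y ∈ m.head?, NC lA' y) →
      (∃ r, bg = [lA, lB, lB, lB, lB] ++ r) → InC' ((gc s)⁻¹ * v) := by
    rintro bg m hEq hcb hcm hlast hhead ⟨r, rfl⟩
    have hw : ((gc s)⁻¹ * v).toWord = ([lA, lB, lB, lB, lB] ++ r) ++ m := by
      rw [hEq]
      refine toWord_concat hcb hcm ?_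
      intro x hx y hy
      rw [hlast] at hx; simp at hx; subst hx
      exact hhead y hy
    exact ⟨lB :: (r ++ m), by rw [hw]; simp [List.append_assoc]⟩
  rcases l with _ | ⟨y, l₂⟩
  · -- v = b
    exact conclude (ib1 s) [] hmul1 (chain_ib1 s) List.isChain_nil (last_ib1 s)
      (by intro y hy; simp at hy) ⟨_, rfl⟩
  by_cases hyA : y = lA
  · subst hyA
    have hsplit2 : FreeGroup.mk (lA :: l₂) = ga * FreeGroup.mk l₂ := by
      rw [ga_mk, FreeGroup.mul_mk]; rfl
    have hmul2 : (gc s)⁻¹ * v = FreeGroup.mk (ib2 s) * FreeGroup.mk l₂ := by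
      rw [hmul1, hsplit2, ← mul_assoc, ← gci_gb, mul_assoc ((gc s)⁻¹ * gb) ga (FreeGroup.mk l₂), ← mul_assoc, gci_gba]
    have hchl2 : l₂.Chain' NC := hchl.tail
    rcases l₂ with _ | ⟨z, l₃⟩
    · exact conclude (ib2 s) [] hmul2 (chain_ib2 s) List.isChain_nil (last_ib2 s)
        (by intro y hy; simp at hy) ⟨_, rfl⟩
    by_cases hzA : z = lA
    · subst hzA
      have hsplit3 : FreeGroup.mk (lA :: l₃) = ga * FreeGroup.mk l₃ := by
        rw [ga_mk, FreeGroup.mul_mk]; rfl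
      have hmul3 : (gc s)⁻¹ * v = FreeGroup.mk (ib3 s) * FreeGroup.mk l₃ := by
        rw [hmul2, hsplit3, ← mul_assoc, ← gci_gba, mul_assoc ((gc s)⁻¹ * gb * ga) ga (FreeGroup.mk l₃), ← mul_assoc, gci_gbaa]
      have hchl3 : l₃.Chain' NC := hchl2.tail
      refine conclude (ib3 s) l₃ hmul3 (chain_ib3 s) hchl3 (last_ib3 s) ?_ ⟨_, rfl⟩
      intro u hu
      rcases l₃ with _ | ⟨u', l₄⟩
      · simp at hu
      · simp at hu; subst hu
        refine nc_lA' ?_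
        intro huA
        exact hnc ⟨l₄, by rw [hv, huA]⟩
    · refine conclude (ib2 s) (z :: l₃) hmul2 (chain_ib2 s) hchl2 (last_ib2 s) ?_ ⟨_, rfl⟩
      intro u hu; simp at hu; subst hu
      exact nc_lA' hzA
  · refine conclude (ib1 s) (y :: l₂) hmul1 (chain_ib1 s) hchl (last_ib1 s) ?_ ⟨_, rfl⟩
    intro u hu; simp at hu; subst hu
    exact nc_lA' hyA

end Pf

namespace Pf

open FreeGroup List

-- base class membership
lemma inB_gb : InB gb := by
  have h : gb.toWord = [lB] := FreeGroup.toWord_of 1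
  exact ⟨⟨[], h⟩, by rintro ⟨l, hl⟩; rw [h] at hl; simp at hl⟩

lemma inB'_gbi : InB' gb⁻¹ := by
  have h : (gb⁻¹).toWord = [lB'] := by
    rw [gbinv_mk, FreeGroup.toWord_mk]; rfl
  exact Or.inl ⟨[], h⟩

lemma toWord_gc (s : ℕ) : (gc s).toWord = cw s := by
  rw [gc_mk, FreeGroup.toWord_mk, chain_reduce (chain_cw s)]

lemma toWord_gci (s : ℕ) : ((gc s)⁻¹).toWord = icw s := by
  rw [gci_mk, FreeGroup.toWord_mk, chain_reduce (chain_icw s)]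

lemma inC_gc (s : ℕ) : InC (gc s) :=
  ⟨lA :: (midw s ++ [lB', lB', lB', lB', lA']), by
    rw [toWord_gc, cw_decomp]; simp [List.append_assoc]⟩

lemma inC'_gci (s : ℕ) : InC' ((gc s)⁻¹) :=
  ⟨lB :: (FreeGroup.invRev (midw s) ++ [lA', lA', lA', lA', lB']), by
    rw [toWord_gci, icw_decomp]; simp [List.append_assoc]⟩

/-- the substitution endomorphism : a ↦ b, b ↦ c -/
def ρ (s : ℕ) : F →* F := FreeGroup.lift (fun i : Fin 2 => if i = 0 then gb else gc s)

lemma rho_a (s : ℕ) : ρ s ga = gb := by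
  rw [ρ, ga]; simp
lemma rho_b (s : ℕ) : ρ s gb = gc s := by
  rw [ρ, gb]; simp

def ClsOf (x : Ltr) : F → Prop :=
  if x.1 = 0 then (if x.2 then InB else InB') else (if x.2 then InC else InC')

def genE (s : ℕ) (x : Ltr) : F :=
  if x.1 = 0 then (if x.2 then gb else gb⁻¹) else (if x.2 then gc s else (gc s)⁻¹)

lemma rho_single (s : ℕ) (x : Ltr) : ρ s (FreeGroup.mk [x]) = genE s x := by
  rcases x with ⟨i, e⟩
  have h0 : (i = 0) ∨ (i = 1) := by omega
  cases e
  · have : FreeGroup.mk [(i, false)] = (FreeGroup.of i)⁻¹ := mk_neg i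
    rw [this, MonoidHom.map_inv]
    rcases h0 with rfl | rfl
    · rw [show FreeGroup.of (0:Fin 2) = ga from rfl, rho_a]; rfl
    · rw [show FreeGroup.of (1:Fin 2) = gb from rfl, rho_b]; rfl
  · have : FreeGroup.mk [(i, true)] = FreeGroup.of i := rfl
    rw [this]
    rcases h0 with rfl | rfl
    · rw [show FreeGroup.of (0:Fin 2) = ga from rfl, rho_a]; rfl
    · rw [show FreeGroup.of (1:Fin 2) = gb from rfl, rho_b]; rfl

set_option maxHeartbeats 1000000 in
lemma master (s : ℕ) : ∀ (l' : List Ltr) (x : Ltr), (x :: l').Chain' NC →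
    ClsOf x (ρ s (FreeGroup.mk (x :: l'))) := by
  intro l'
  induction l' with
  | nil =>
    intro x _
    rw [rho_single]
    rcases x with ⟨i, e⟩
    have h0 : (i = 0) ∨ (i = 1) := by omega
    rcases h0 with rfl | rfl <;> cases e <;>
      simp only [ClsOf, genE, if_true, if_false, reduceIte] <;>
      first
        | exact inB_gb
        | exact inB'_gbi
        | exact inC_gc s
        | exact inC'_gci s
  | cons y l'' ih =>
    intro x hch
    have hNC : NC x y := (List.isChain_cons_cons.mp hch).1
    have hcls := ih y hch.tail
    have hsplit : FreeGroup.mk (x :: y :: l'') = FreeGroup.mk [x] * FreeGroup.mk (y :: l'') := by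
      rw [FreeGroup.mul_mk]; rfl
    rw [hsplit, MonoidHom.map_mul, rho_single]
    set g := ρ s (FreeGroup.mk (y :: l'')) with hg
    clear_value g
    rcases x with ⟨i, e⟩
    rcases y with ⟨j, e'⟩
    have h0 : (i = 0) ∨ (i = 1) := by omega
    have h1 : (j = 0) ∨ (j = 1) := by omega
    rcases h0 with rfl | rfl <;> rcases h1 with rfl | rfl <;> cases e <;> cases e' <;>
      simp only [ClsOf, genE] at hcls ⊢ <;> simp at hcls ⊢ <;>
      first
        | exact Bool.noConfusion (hNC rfl)
        | exact mulB_B hcls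
        | exact mulB_C hcls
        | exact mulB_C' hcls
        | exact mulB'_B' hcls
        | exact mulB'_C hcls
        | exact mulB'_C' hcls
        | exact mulC_C hcls
        | exact mulC_B hcls
        | exact mulC_B' hcls
        | exact mulC'_C' hcls
        | exact mulC'_B' hcls
        | exact mulC'_B hcls

lemma cls_ne_one {x : Ltr} {g : F} (h : ClsOf x g) : g ≠ 1 := by
  have : g.toWord ≠ [] := by
    rcases x with ⟨i, e⟩
    have h0 : (i = 0) ∨ (i = 1) := by omega
    rcases h0 with rfl | rfl <;> cases e <;>
      simp only [ClsOf, if_true, if_false, reduceIte] at h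
    · rcases h with ⟨l, hl⟩ | ⟨l, hl⟩ <;> simp [hl]
    · obtain ⟨⟨l, hl⟩, -⟩ := h; simp [hl]
    · obtain ⟨l, hl⟩ := h; simp [hl]
    · obtain ⟨l, hl⟩ := h; simp [hl]
  intro hg
  exact this (by rw [hg, FreeGroup.toWord_one])

lemma cls_ne_a {x : Ltr} {g : F} (h : ClsOf x g) : g ≠ ga := by
  have hga : ga.toWord = [lA] := FreeGroup.toWord_of 0
  intro hg
  subst hg
  rcases x with ⟨i, e⟩
  have h0 : (i = 0) ∨ (i = 1) := by omega
  rcases h0 with rfl | rfl <;> cases e <;>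
    simp only [ClsOf, if_true, if_false, reduceIte] at h
  · rcases h with ⟨l, hl⟩ | ⟨l, hl⟩ <;> rw [hga] at hl <;> simp [lA, lB'] at hl
  · obtain ⟨⟨l, hl⟩, -⟩ := h; rw [hga] at hl; simp [lA, lB] at hl
  · obtain ⟨l, hl⟩ := h; rw [hga] at hl; simp at hl
  · obtain ⟨l, hl⟩ := h; rw [hga] at hl; simp at hl

theorem rho_inj (s : ℕ) : Function.Injective (ρ s) := by
  rw [injective_iff_map_eq_one]
  intro w hw
  by_contra hne
  have hl : w.toWord ≠ [] := fun h => hne (FreeGroup.toWord_eq_nil_iff.mp h)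
  rcases hvw : w.toWord with _ | ⟨x, l'⟩
  · exact hl hvw
  · have := master s l' x (hvw ▸ chain_toWord w)
    rw [← hvw, FreeGroup.mk_toWord] at this
    exact cls_ne_one this hw

theorem a_notin_range (s : ℕ) : ga ∉ (ρ s).range := by
  rintro ⟨w, hw⟩
  have hw1 : w ≠ 1 := by
    intro h; subst h
    rw [MonoidHom.map_one] at hw
    exact FreeGroup.of_ne_one 0 hw.symm
  rcases hvw : w.toWord with _ | ⟨x, l'⟩
  · exact hw1 (FreeGroup.toWord_eq_nil_iff.mp hvw)
  · have := master s l' x (hvw ▸ chain_toWord w)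
    rw [← hvw, FreeGroup.mk_toWord] at this
    exact cls_ne_a this hw

end Pf

namespace Pf

lemma map_W {G H : Type*} [Group G] [Group H] (f : G →* H) (s : ℕ) (x y : G) :
    f (W s x y) = W s (f x) (f y) := by
  rw [W, W, map_mul, map_list_prod, List.map_map]
  congr 1
  refine congrArg List.prod (List.map_congr_left ?_)
  intro i _
  simp [map_mul, map_pow]

def Bsub (s : ℕ) : Subgroup F := (ρ s).range

noncomputable def φiso (s : ℕ) : (⊤ : Subgroup F) ≃* Bsub s :=
  Subgroup.topEquiv.trans (MonoidHom.ofInjective (rho_inj s))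

abbrev HNN (s : ℕ) : Type := HNNExtension F ⊤ (Bsub s) (φiso s)

lemma phi_coe (s : ℕ) (g : F) (h : g ∈ (⊤ : Subgroup F)) :
    ((φiso s ⟨g, h⟩ : Bsub s) : F) = ρ s g := by
  simp [φiso, MonoidHom.ofInjective_apply]
  rfl

lemma conj_of (s : ℕ) (g : F) :
    (HNNExtension.t : HNN s) * HNNExtension.of g * HNNExtension.t⁻¹
      = HNNExtension.of (ρ s g) := by
  have h := HNNExtension.equiv_eq_conj (G := F) (A := ⊤) (B := Bsub s) (φ := φiso s)
    ⟨g, trivial⟩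
  erw [phi_coe] at h
  exact h.symm

-- presented group side
abbrev PG (s : ℕ) : Type := PresentedGroup (gsrels s)

def ap (s : ℕ) : PG s := PresentedGroup.of 0
def bp (s : ℕ) : PG s := PresentedGroup.of 1
def tp (s : ℕ) : PG s := PresentedGroup.of 2

lemma mk_rel_one {α : Type*} (rels : Set (FreeGroup α)) {r : FreeGroup α} (hr : r ∈ rels) :
    PresentedGroup.mk rels r = 1 :=
  (QuotientGroup.eq_one_iff r).mpr (Subgroup.subset_normalClosure hr)

lemma mk_of {α : Type*} (rels : Set (FreeGroup α)) (x : α) :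
    PresentedGroup.mk rels (FreeGroup.of x) = PresentedGroup.of x := rfl

lemma pg_r1 (s : ℕ) : (tp s)⁻¹ * ap s * tp s = bp s := by
  have h := mk_rel_one (gsrels s) (r := (FreeGroup.of 2)⁻¹ * FreeGroup.of 0 * FreeGroup.of 2 *
      (FreeGroup.of 1)⁻¹) (Set.mem_insert _ _)
  simp only [map_mul, map_inv, mk_of] at h
  rw [ap, bp, tp]
  exact mul_inv_eq_one.mp h

lemma pg_r2 (s : ℕ) :
    (tp s)⁻¹ * bp s * tp s = W s (bp s) (ap s) * bp s * (W s (ap s) (bp s))⁻¹ := by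
  have h := mk_rel_one (gsrels s) (r := (FreeGroup.of 2)⁻¹ * FreeGroup.of 1 * FreeGroup.of 2 *
     (W s (FreeGroup.of 1) (FreeGroup.of 0) * FreeGroup.of 1 *
       (W s (FreeGroup.of 0) (FreeGroup.of 1))⁻¹)⁻¹) (Set.mem_insert_of_mem _ rfl)
  simp only [map_mul, map_inv, mk_of, map_W] at h
  rw [ap, bp, tp]
  exact mul_inv_eq_one.mp h

end Pf

namespace Pf

noncomputable def fgen (s : ℕ) : Fin 3 → HNN s := fun i =>
  if i = 0 then HNNExtension.of ga else if i = 1 then HNNExtension.of gb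
  else HNNExtension.t⁻¹

lemma fgen0 (s : ℕ) : fgen s 0 = HNNExtension.of ga := rfl
lemma fgen1 (s : ℕ) : fgen s 1 = HNNExtension.of gb := by
  simp [fgen, show (1 : Fin 3) ≠ 0 by decide]
lemma fgen2 (s : ℕ) : fgen s 2 = HNNExtension.t⁻¹ := by
  simp [fgen, show (2 : Fin 3) ≠ 0 by decide, show (2 : Fin 3) ≠ 1 by decide]

lemma fgen_rels (s : ℕ) : ∀ r ∈ gsrels s, FreeGroup.lift (fgen s) r = 1 := by
  intro r hr
  rcases hr with rfl | hr
  · simp only [map_mul, map_inv, FreeGroup.lift_apply_of, fgen0, fgen1, fgen2]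
    refine mul_inv_eq_one.mpr ?_
    rw [inv_inv, conj_of, rho_a]
  · rcases hr with rfl
    simp only [map_mul, map_inv, FreeGroup.lift_apply_of, fgen0, fgen1, fgen2, map_W]
    refine mul_inv_eq_one.mpr ?_
    rw [inv_inv, conj_of, rho_b, gc_eq, map_mul, map_mul, map_inv, map_W, map_W]

noncomputable def fpg (s : ℕ) : PG s →* HNN s := PresentedGroup.toGroup (fgen_rels s)

lemma fpg_of (s : ℕ) (x : Fin 3) : fpg s (PresentedGroup.of x) = fgen s x :=
  PresentedGroup.toGroup.of (fgen_rels s)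

noncomputable def flift (s : ℕ) : F →* PG s :=
  FreeGroup.lift (fun i : Fin 2 => if i = 0 then ap s else bp s)

lemma flift_ga (s : ℕ) : flift s ga = ap s := by simp [flift, ga]
lemma flift_gb (s : ℕ) : flift s gb = bp s := by
  simp [flift, gb, show (1 : Fin 2) ≠ 0 by decide]

lemma key (s : ℕ) (g : F) : (tp s)⁻¹ * flift s g * tp s = flift s (ρ s g) := by
  have heq : ((MulAut.conj (tp s)⁻¹).toMonoidHom.comp (flift s)) = (flift s).comp (ρ s) := by
    apply FreeGroup.ext_hom
    intro i
    have h0 : i = 0 ∨ i = 1 := by omega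
    rcases h0 with rfl | rfl
    · show (MulAut.conj (tp s)⁻¹) (flift s (FreeGroup.of 0)) = flift s (ρ s (FreeGroup.of 0))
      rw [show (FreeGroup.of (0 : Fin 2) : F) = ga from rfl, flift_ga, rho_a, flift_gb,
        MulAut.conj_apply, inv_inv]
      exact pg_r1 s
    · show (MulAut.conj (tp s)⁻¹) (flift s (FreeGroup.of 1)) = flift s (ρ s (FreeGroup.of 1))
      rw [show (FreeGroup.of (1 : Fin 2) : F) = gb from rfl, flift_gb, rho_b,
        MulAut.conj_apply, inv_inv, gc_eq, map_mul, map_mul, map_inv, map_W, map_W,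
        flift_ga, flift_gb]
      exact pg_r2 s
  have h2 := DFunLike.congr_fun heq g
  simpa [MulAut.conj_apply, inv_inv] using h2

noncomputable def ghn (s : ℕ) : HNN s →* PG s :=
  HNNExtension.lift (flift s) ((tp s)⁻¹) (by
    rintro ⟨g, -⟩
    rw [show ((φiso s ⟨g, trivial⟩ : Bsub s) : F) = ρ s g from phi_coe s g trivial,
      ← key s g]
    group)

lemma ghn_of (s : ℕ) (g : F) : ghn s (HNNExtension.of g) = flift s g :=
  HNNExtension.lift_of _ _ _ g
lemma ghn_t (s : ℕ) : ghn s HNNExtension.t = (tp s)⁻¹ :=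
  HNNExtension.lift_t _ _ _

lemma comp_eq_id1 (s : ℕ) : (ghn s).comp (fpg s) = MonoidHom.id (PG s) := by
  apply PresentedGroup.ext
  intro x
  have h0 : x = 0 ∨ x = 1 ∨ x = 2 := by omega
  rcases h0 with rfl | rfl | rfl <;>
    simp only [MonoidHom.comp_apply, MonoidHom.id_apply, fpg_of, fgen0, fgen1, fgen2,
      map_inv, ghn_of, ghn_t, flift_ga, flift_gb, inv_inv]
  · rfl
  · rfl
  · rfl

lemma comp_eq_id2 (s : ℕ) : (fpg s).comp (ghn s) = MonoidHom.id (HNN s) := by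
  apply HNNExtension.hom_ext
  · apply FreeGroup.ext_hom
    intro i
    have h0 : i = 0 ∨ i = 1 := by omega
    rcases h0 with rfl | rfl <;>
      simp only [MonoidHom.comp_apply, MonoidHom.id_apply, ghn_of]
    · rw [show (FreeGroup.of (0 : Fin 2) : F) = ga from rfl, flift_ga, ap, fpg_of, fgen0]
    · rw [show (FreeGroup.of (1 : Fin 2) : F) = gb from rfl, flift_gb, bp, fpg_of, fgen1]
  · simp only [MonoidHom.comp_apply, MonoidHom.id_apply, ghn_t, map_inv]
    rw [tp, fpg_of, fgen2, inv_inv]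

noncomputable def eqv (s : ℕ) : PG s ≃* HNN s :=
  MonoidHom.toMulEquiv (fpg s) (ghn s) (comp_eq_id1 s) (comp_eq_id2 s)

end Pf

namespace Pf

open Subgroup

/-- conjugation homomorphism -/
def cjh {G : Type*} [Group G] (u : G) : G →* G := (MulAut.conj u).toMonoidHom

lemma cjh_apply {G : Type*} [Group G] (u x : G) : cjh u x = u * x * u⁻¹ := rfl

lemma cjh_injective {G : Type*} [Group G] (u : G) : Function.Injective (cjh u) :=
  (MulAut.conj u).injective

noncomputable abbrev dd (s : ℕ) : HNN s := (HNNExtension.t : HNN s)⁻¹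

noncomputable def A0 (s : ℕ) : Subgroup (HNN s) :=
  (HNNExtension.of : F →* HNN s).range

noncomputable def An (s : ℕ) (n : ℕ) : Subgroup (HNN s) := (A0 s).map (cjh (dd s ^ n))

lemma cjh_mul {G : Type*} [Group G] (u v : G) : (cjh u).comp (cjh v) = cjh (u * v) := by
  ext x; simp [cjh_apply, mul_assoc]

lemma An_zero (s : ℕ) : An s 0 = A0 s := by
  rw [An]
  ext x
  simp [Subgroup.mem_map, cjh_apply]

lemma An_succ (s : ℕ) (n : ℕ) : An s (n + 1) = (An s 1).map (cjh (dd s ^ n)) := by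
  rw [An, An, Subgroup.map_map, cjh_mul, pow_one, ← pow_succ]

lemma A0_le_A1 (s : ℕ) : A0 s ≤ An s 1 := by
  rintro x ⟨g, rfl⟩
  refine ⟨HNNExtension.of (ρ s g), ⟨ρ s g, rfl⟩, ?_⟩
  rw [cjh_apply, pow_one, dd, inv_inv, ← conj_of s g]
  group

lemma An_mono (s : ℕ) : Monotone (An s) := by
  refine monotone_nat_of_le_succ ?_
  intro n
  rw [An_succ]
  exact le_trans (le_of_eq rfl) (Subgroup.map_mono (f := cjh (dd s ^ n)) (A0_le_A1 s))

lemma An1_not_le_A0 (s : ℕ) : ¬ An s 1 ≤ A0 s := by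
  intro hle
  have hmem : (dd s) * HNNExtension.of ga * (dd s)⁻¹ ∈ An s 1 := by
    refine ⟨HNNExtension.of ga, ⟨ga, rfl⟩, ?_⟩
    rw [cjh_apply, pow_one]
  obtain ⟨h, hh⟩ := hle hmem
  have h2 : (HNNExtension.of (ρ s h) : HNN s) = HNNExtension.of ga := by
    rw [← conj_of s h, hh]
    simp only [dd]
    group
  exact a_notin_range s ⟨h, HNNExtension.of_injective (φ := φiso s) h2⟩

noncomputable def HH (s : ℕ) : Subgroup (HNN s) := ⨆ n, An s n

lemma An_le_HH (s : ℕ) (n : ℕ) : An s n ≤ HH s := le_iSup (An s) n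

lemma exists_le_An {s : ℕ} {K : Subgroup (HNN s)} (hK : K ≤ HH s) (hfg : K.FG) :
    ∃ n, K ≤ An s n := by
  obtain ⟨S, hS⟩ := hfg
  have hmem : ∀ x ∈ (S : Set (HNN s)), ∃ n, x ∈ An s n := by
    intro x hx
    have : x ∈ HH s := hK (hS ▸ Subgroup.subset_closure hx)
    exact (Subgroup.mem_iSup_of_directed ((An_mono s).directed_le)).mp this
  choose! f hf using hmem
  refine ⟨S.sup f, ?_⟩
  rw [← hS, Subgroup.closure_le]
  intro x hx
  exact An_mono s (Finset.le_sup hx) (hf x hx)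

lemma HH_not_fg (s : ℕ) : ¬ (HH s).FG := by
  intro hfg
  obtain ⟨n, hn⟩ := exists_le_An le_rfl hfg
  have h1 : An s (n + 1) ≤ An s n := le_trans (An_le_HH s (n + 1)) hn
  rw [An_succ, An] at h1
  have h2 : An s 1 ≤ A0 s :=
    (Subgroup.map_le_map_iff_of_injective (cjh_injective (dd s ^ n))).mp h1
  exact An1_not_le_A0 s h2

-- freeness of the pieces
noncomputable def isoA0 (s : ℕ) : F ≃* A0 s :=
  MonoidHom.ofInjective (HNNExtension.of_injective (φ := φiso s))

noncomputable def isoAn (s : ℕ) (n : ℕ) : (A0 s) ≃* An s n :=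
  Subgroup.equivMapOfInjective (A0 s) _ (cjh_injective (dd s ^ n))

instance free_An (s : ℕ) (n : ℕ) : IsFreeGroup (An s n) :=
  IsFreeGroup.ofMulEquiv ((isoA0 s).trans (isoAn s n))

-- 2-generation of the pieces
lemma top_F : Subgroup.closure ({ga, gb} : Set F) = ⊤ := by
  have h := FreeGroup.closure_range_of (Fin 2)
  have : Set.range (FreeGroup.of : Fin 2 → F) = {ga, gb} := by
    ext x
    simp only [Set.mem_range, Set.mem_insert_iff, Set.mem_singleton_iff]
    constructor
    · rintro ⟨i, rfl⟩
      have h0 : i = 0 ∨ i = 1 := by omega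
      rcases h0 with rfl | rfl
      · left; rfl
      · right; rfl
    · rintro (rfl | rfl)
      · exact ⟨0, rfl⟩
      · exact ⟨1, rfl⟩
  rw [this] at h
  exact h

lemma An_two_gen (s : ℕ) (n : ℕ) : ∃ u v : HNN s,
    An s n = Subgroup.closure {u, v} := by
  refine ⟨cjh (dd s ^ n) (HNNExtension.of ga), cjh (dd s ^ n) (HNNExtension.of gb), ?_⟩
  have h0 : A0 s = Subgroup.closure {HNNExtension.of ga, HNNExtension.of gb} := by
    have hmc := MonoidHom.map_closure (HNNExtension.of : F →* HNN s) {ga, gb}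
    rw [top_F] at hmc
    rw [Set.image_pair] at hmc
    rw [A0, MonoidHom.range_eq_map, hmc]
  rw [An, h0, MonoidHom.map_closure, Set.image_pair]

end Pf

namespace Pf

open Subgroup

lemma locally_free (s : ℕ) : ∀ K : Subgroup ↥(HH s), K.FG → IsFreeGroup K := by
  intro K hfg
  set K1 : Subgroup (HNN s) := K.map (HH s).subtype with hK1
  have hK1le : K1 ≤ HH s := by
    rintro x ⟨y, hy, rfl⟩
    exact SetLike.coe_mem _
  have hK1fg : K1.FG := by
    obtain ⟨S, hS⟩ := hfg
    rw [Subgroup.fg_iff]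
    refine ⟨(HH s).subtype '' S, ?_, (S.finite_toSet.image _)⟩
    rw [← MonoidHom.map_closure, hS]
  obtain ⟨n, hn⟩ := exists_le_An hK1le hK1fg
  have e1 : K ≃* K1 := Subgroup.equivMapOfInjective K (HH s).subtype (Subgroup.subtype_injective _)
  have e2 : (K1.subgroupOf (An s n)) ≃* K1 := Subgroup.subgroupOfEquivOfLe hn
  have hfree : IsFreeGroup (K1.subgroupOf (An s n)) := subgroupIsFreeOfIsFree _
  exact IsFreeGroup.ofMulEquiv (e2.trans e1.symm)

lemma not_free_HH (s : ℕ) : ¬ IsFreeGroup ↥(HH s) := by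
  intro hfree
  rcases finite_or_infinite (IsFreeGroup.Generators ↥(HH s)) with hfin | hinf
  · have hfg2 : Group.FG (FreeGroup (IsFreeGroup.Generators ↥(HH s))) := by
      rw [Group.fg_iff]
      exact ⟨Set.range FreeGroup.of, FreeGroup.closure_range_of _, Set.finite_range _⟩
    have : Group.FG ↥(HH s) :=
      Group.fg_of_surjective
        (f := (IsFreeGroup.toFreeGroup (G := ↥(HH s))).symm.toMonoidHom)
        (IsFreeGroup.toFreeGroup (G := ↥(HH s))).symm.surjective
    exact HH_not_fg s ((Group.fg_iff_subgroup_fg (HH s)).mp this)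
  · set X := IsFreeGroup.Generators ↥(HH s) with hX
    let e : ↥(HH s) ≃* FreeGroup X := IsFreeGroup.toFreeGroup ↥(HH s)
    let emb := Infinite.natEmbedding X
    let xk : Fin 3 → ↥(HH s) := fun k => e.symm (FreeGroup.of (emb k))
    have hx : ∀ k : Fin 3, ∃ n, ((xk k : HNN s)) ∈ An s n := fun k =>
      (Subgroup.mem_iSup_of_directed ((An_mono s).directed_le)).mp (xk k).2
    choose f hf using hx
    set N := max (f 0) (max (f 1) (f 2)) with hN
    have hxN : ∀ k, ((xk k : HNN s)) ∈ An s N := by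
      intro k
      refine An_mono s ?_ (hf k)
      fin_cases k <;> simp [hN]
    obtain ⟨u, v, huv⟩ := An_two_gen s N
    have hu : u ∈ HH s := An_le_HH s N (huv ▸ Subgroup.subset_closure (Set.mem_insert _ _))
    have hv : v ∈ HH s :=
      An_le_HH s N (huv ▸ Subgroup.subset_closure (Set.mem_insert_of_mem _ rfl))
    have hcl : ∀ k, xk k ∈ Subgroup.closure ({⟨u, hu⟩, ⟨v, hv⟩} : Set ↥(HH s)) := by
      intro k
      have h1 : ((xk k : HNN s)) ∈ Subgroup.closure {u, v} := huv ▸ hxN k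
      have h2 : (Subgroup.closure ({⟨u, hu⟩, ⟨v, hv⟩} : Set ↥(HH s))).map (HH s).subtype
          = Subgroup.closure {u, v} := by
        rw [MonoidHom.map_closure, Set.image_pair]
        rfl
      rw [← h2] at h1
      obtain ⟨y, hy, hyx⟩ := h1
      have : y = xk k := Subtype.ext hyx
      rwa [← this]
    let ψ : ↥(HH s) →* Multiplicative (X →₀ ℚ) :=
      (FreeGroup.lift (fun i : X => Multiplicative.ofAdd (Finsupp.single i (1:ℚ)))).comp
        e.toMonoidHom
    have hψx : ∀ k, ψ (xk k) = Multiplicative.ofAdd (Finsupp.single (emb k) (1:ℚ)) := by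
      intro k
      simp only [ψ, xk, MonoidHom.comp_apply, MulEquiv.coe_toMonoidHom,
        MulEquiv.apply_symm_apply, FreeGroup.lift_apply_of]
    -- pass to the span
    set w1 : X →₀ ℚ := Multiplicative.toAdd (ψ ⟨u, hu⟩) with hw1
    set w2 : X →₀ ℚ := Multiplicative.toAdd (ψ ⟨v, hv⟩) with hw2
    have hspan : ∀ k : Fin 3,
        Finsupp.single (emb k) (1:ℚ) ∈ Submodule.span ℚ {w1, w2} := by
      intro k
      set T : Subgroup (Multiplicative (X →₀ ℚ)) :=
        AddSubgroup.toSubgroup (Submodule.span ℚ ({w1, w2} : Set (X →₀ ℚ))).toAddSubgroup with hT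
      have hsub : Subgroup.closure {ψ ⟨u, hu⟩, ψ ⟨v, hv⟩} ≤ T := by
        rw [Subgroup.closure_le]
        rintro x (rfl | rfl)
        · show Multiplicative.toAdd (ψ ⟨u, hu⟩) ∈ (Submodule.span ℚ ({w1, w2} : Set (X →₀ ℚ))).toAddSubgroup
          exact Submodule.subset_span (Set.mem_insert _ _)
        · show Multiplicative.toAdd (ψ ⟨v, hv⟩) ∈ (Submodule.span ℚ ({w1, w2} : Set (X →₀ ℚ))).toAddSubgroup
          exact Submodule.subset_span (Set.mem_insert_of_mem _ rfl)
      have hmem : ψ (xk k) ∈ Subgroup.closure {ψ ⟨u, hu⟩, ψ ⟨v, hv⟩} := by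
        have h3 := Subgroup.mem_map_of_mem ψ (hcl k)
        rw [MonoidHom.map_closure, Set.image_pair] at h3
        exact h3
      have := hsub hmem
      rw [hψx k] at this
      exact this
    -- dimension contradiction
    classical
    have hli : LinearIndependent ℚ (fun k : Fin 3 => Finsupp.single (emb k) (1:ℚ)) := by
      have hb := (Finsupp.basisSingleOne (R := ℚ) (ι := X)).linearIndependent
      rw [Finsupp.coe_basisSingleOne] at hb
      exact hb.comp (fun k : Fin 3 => emb k) (emb.injective.comp Fin.val_injective)
    haveI : FiniteDimensional ℚ (Submodule.span ℚ ({w1, w2} : Set (X →₀ ℚ))) :=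
      FiniteDimensional.span_of_finite ℚ (Set.toFinite _)
    have h3 : (3 : ℕ) ≤ Module.finrank ℚ (Submodule.span ℚ ({w1, w2} : Set (X →₀ ℚ))) := by
      have hli' : LinearIndependent ℚ
          (fun k : Fin 3 => (⟨Finsupp.single (emb k) (1:ℚ), hspan k⟩ :
            Submodule.span ℚ ({w1, w2} : Set (X →₀ ℚ)))) := by
        apply LinearIndependent.of_comp (Submodule.span ℚ ({w1, w2} : Set (X →₀ ℚ))).subtype
        exact hli
      simpa using hli'.fintype_card_le_finrank
    have h2 : Module.finrank ℚ (Submodule.span ℚ ({w1, w2} : Set (X →₀ ℚ))) ≤ 2 := by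
      refine le_trans (finrank_span_le_card _) ?_
      have : ({w1, w2} : Set (X →₀ ℚ)).toFinset ⊆ {w1, w2} := by
        intro x hx
        simpa using hx
      refine le_trans (Finset.card_le_card this) ?_
      exact le_trans (Finset.card_insert_le _ _) (by simp)
    omega

end Pf

namespace Pf

lemma fg_map' {G N : Type*} [Group G] [Group N] {K : Subgroup G} (h : K.FG) (f : G →* N) :
    (K.map f).FG := by
  obtain ⟨S, hS⟩ := h
  rw [Subgroup.fg_iff]
  exact ⟨f '' S, by rw [← MonoidHom.map_closure, hS], S.finite_toSet.image _⟩

end Pf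

theorem stmt_17 (s : ℕ) (hs : 3 ≤ s) :
    ∃ H : Subgroup (PresentedGroup (gsrels s)),
      (∀ K : Subgroup H, K.FG → IsFreeGroup K) ∧ ¬ IsFreeGroup H := by
  classical
  refine ⟨(Pf.HH s).map (Pf.eqv s).symm.toMonoidHom, ?_, ?_⟩
  · intro K hKfg
    set μ : ↥(Pf.HH s) ≃* ↥((Pf.HH s).map (Pf.eqv s).symm.toMonoidHom) :=
      Subgroup.equivMapOfInjective _ _ (Pf.eqv s).symm.injective with hμ
    set K' : Subgroup ↥(Pf.HH s) := K.map μ.symm.toMonoidHom with hK'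
    have hK'fg : K'.FG := Pf.fg_map' hKfg _
    haveI hfree' : IsFreeGroup ↥K' := Pf.locally_free s K' hK'fg
    have ν : ↥K' ≃* ↥(K'.map μ.toMonoidHom) :=
      Subgroup.equivMapOfInjective K' μ.toMonoidHom μ.injective
    have hKK : K'.map μ.toMonoidHom = K := by
      rw [hK', Subgroup.map_map]
      have : (μ.toMonoidHom.comp μ.symm.toMonoidHom) = MonoidHom.id _ := by
        ext x; exact congrArg Subtype.val (μ.apply_symm_apply x)
      rw [this, Subgroup.map_id]
    rw [hKK] at ν
    exact IsFreeGroup.ofMulEquiv ν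
  · intro h
    set μ : ↥(Pf.HH s) ≃* ↥((Pf.HH s).map (Pf.eqv s).symm.toMonoidHom) :=
      Subgroup.equivMapOfInjective _ _ (Pf.eqv s).symm.injective with hμ
    haveI := h
    exact Pf.not_free_HH s (IsFreeGroup.ofMulEquiv μ.symm)
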